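/- Let P be a positive opetope, i ∈ ℕ, and p ∈ P*_{i+1} = P_{i+1} − γ(P_{i+2}). Then the set π_i(p) = { s ∈ P_i − γ(P_{i+1}) : s <⁺ γ(p) } is a convex subtree of (P_i − γ(P_{i+1}), ≤⁻): it has a largest element, and whenever p₁, p₃ ∈ π_i(p) and p₁ <⁻ p₂ <⁻ p₃ with p₂ ∈ P_i − γ(P_{i+1}), then p₂ ∈ π_i(p). -/

import Mathlib

/-- A positive hypergraph: graded faces with codomain functions `γ` and (total) domain
relations `δ`. -/
structure PreOpetope where
  P : ℕ → Type
  γ : ∀ k, P (k+1) → P k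
  δ : ∀ k, P (k+1) → Set (P k)

namespace PreOpetope

/-- The lower order `<⁻` on `P (k+1)`: transitive closure of `γ a ∈ δ b`. -/
def ltm (O : PreOpetope) (k : ℕ) : O.P (k+1) → O.P (k+1) → Prop :=
  Relation.TransGen (fun a b => O.γ k a ∈ O.δ k b)

/-- The lower order in every dimension (empty in dimension `0`). -/
def ltmAll (O : PreOpetope) : ∀ k, O.P k → O.P k → Prop
  | 0 => fun _ _ => False
  | (k+1) => O.ltm k

/-- The upper order `<⁺` on `P k`: transitive closure of
`∃ c, a ∈ δ c ∧ γ c = b`. -/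
def ltp (O : PreOpetope) (k : ℕ) : O.P k → O.P k → Prop :=
  Relation.TransGen (fun a b => ∃ c : O.P (k+1), a ∈ O.δ k c ∧ O.γ k c = b)

/-- `O` is a positive opetope: a finite positive hypergraph satisfying globularity,
strictness, disjointness and pencil linearity, with at most one maximal face
(`P_l − δ(P_{l+1})`) in every dimension. -/
structure IsOpetope (O : PreOpetope) : Prop where
  fin : ∀ k, Finite (O.P k)
  bounded : ∃ n, ∀ k, n < k → IsEmpty (O.P k)
  ne : Nonempty (O.P 0)
  pos : ∀ k (a : O.P (k+1)), (O.δ k a).Nonempty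
  δzero : ∀ a : O.P 1, ∃! x, x ∈ O.δ 0 a
  glob_γ : ∀ k (a : O.P (k+2)),
    {x : O.P k | x = O.γ k (O.γ (k+1) a)} =
      {x | ∃ b ∈ O.δ (k+1) a, O.γ k b = x} \ {x | ∃ b ∈ O.δ (k+1) a, x ∈ O.δ k b}
  glob_δ : ∀ k (a : O.P (k+2)),
    O.δ k (O.γ (k+1) a) =
      {x | ∃ b ∈ O.δ (k+1) a, x ∈ O.δ k b} \ {x | ∃ b ∈ O.δ (k+1) a, O.γ k b = x}
  strict : ∀ k (a : O.P k), ¬ O.ltp k a a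
  strict0 : ∀ a b : O.P 0, a = b ∨ O.ltp 0 a b ∨ O.ltp 0 b a
  disj : ∀ k (a b : O.P (k+1)),
    ¬ ((O.ltm k a b ∨ O.ltm k b a) ∧ (O.ltp (k+1) a b ∨ O.ltp (k+1) b a))
  pencil_γ : ∀ k (a b : O.P (k+1)), O.γ k a = O.γ k b →
    a = b ∨ O.ltp (k+1) a b ∨ O.ltp (k+1) b a
  pencil_δ : ∀ k (x : O.P k) (a b : O.P (k+1)), x ∈ O.δ k a → x ∈ O.δ k b →
    a = b ∨ O.ltp (k+1) a b ∨ O.ltp (k+1) b a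
  size : ∀ k (a b : O.P k), (¬ ∃ c : O.P (k+1), a ∈ O.δ k c) →
    (¬ ∃ c : O.P (k+1), b ∈ O.δ k c) → a = b

end PreOpetope

/-- `π_i(p) = { s ∈ P_i − γ(P_{i+1}) : s <⁺ γ(p) }`. -/
def PreOpetope.piFace (O : PreOpetope) (i : ℕ) (p : O.P (i+1)) : Set (O.P i) :=
  {s | (¬ ∃ c : O.P (i+1), O.γ i c = s) ∧ O.ltp i s (O.γ i p)}


namespace PreOpetope

variable {O : PreOpetope}

/-- A face is *initial* if it is not the codomain of any face one dimension up. -/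
def Init (O : PreOpetope) (k : ℕ) (s : O.P k) : Prop := ¬ ∃ c : O.P (k+1), O.γ k c = s

lemma ltp_step {k : ℕ} {a b : O.P k} (c : O.P (k+1)) (h : a ∈ O.δ k c) (h2 : O.γ k c = b) :
    O.ltp k a b := Relation.TransGen.single ⟨c, h, h2⟩

lemma ltp_trans {k : ℕ} {a b c : O.P k} (h : O.ltp k a b) (h2 : O.ltp k b c) : O.ltp k a c :=
  Relation.TransGen.trans h h2

lemma not_ltp_init {k : ℕ} {a b : O.P k} (hb : O.Init k b) : ¬ O.ltp k a b := by
  intro h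
  cases h with
  | single h => obtain ⟨c, -, hc⟩ := h; exact hb ⟨c, hc⟩
  | tail _ h => obtain ⟨c, -, hc⟩ := h; exact hb ⟨c, hc⟩

lemma ltm_gamma {k : ℕ} {a b : O.P (k+1)} (h : O.ltm k a b) :
    O.ltp k (O.γ k a) (O.γ k b) :=
  Relation.TransGen.lift (O.γ k) (fun _ _ hxy => ⟨_, hxy, rfl⟩) _ _ h

lemma ltm_irrefl (hO : O.IsOpetope) {k : ℕ} (a : O.P (k+1)) : ¬ O.ltm k a a :=
  fun h => hO.strict k _ (ltm_gamma h)

lemma ltp_wf (hO : O.IsOpetope) (k : ℕ) : WellFounded (O.ltp k) := by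
  have : Finite (O.P k) := hO.fin k
  have ht : IsTrans (O.P k) (O.ltp k) := ⟨fun _ _ _ => ltp_trans⟩
  have hi : IsIrrefl (O.P k) (O.ltp k) := ⟨hO.strict k⟩
  exact Finite.wellFounded_of_trans_of_irrefl _

lemma ltm_flip_wf (hO : O.IsOpetope) (k : ℕ) : WellFounded (flip (O.ltm k)) := by
  have : Finite (O.P (k+1)) := hO.fin (k+1)
  have ht : IsTrans (O.P (k+1)) (flip (O.ltm k)) :=
    ⟨fun _ _ _ h h2 => Relation.TransGen.trans h2 h⟩
  have hi : IsIrrefl (O.P (k+1)) (flip (O.ltm k)) := ⟨fun a => ltm_irrefl hO a⟩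
  exact Finite.wellFounded_of_trans_of_irrefl _

/-- Descending from any face `<⁺`-below `t`, one finds an initial face `<⁺`-below `t`. -/
lemma exists_init_le (hO : O.IsOpetope) {i : ℕ} (t : O.P i) :
    ∀ x, O.ltp i x t → ∃ s, O.Init i s ∧ O.ltp i s t := by
  intro x
  refine (ltp_wf hO i).induction
    (C := fun x => O.ltp i x t → ∃ s, O.Init i s ∧ O.ltp i s t) x ?_
  intro x IH hxt
  by_cases hx : O.Init i x
  · exact ⟨x, hx, hxt⟩
  · obtain ⟨c, hc⟩ := not_not.mp hx
    obtain ⟨x', hx'⟩ := hO.pos i c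
    have hstep : O.ltp i x' x := ltp_step c hx' hc
    exact IH x' hstep (ltp_trans hstep hxt)

/-- The Step lemma: an element of `δ c` either has codomain `γ (γ c)` or its codomain
feeds into another element of `δ c`. -/
lemma step_lemma (hO : O.IsOpetope) {k : ℕ} (c : O.P (k+2)) {x : O.P (k+1)}
    (hx : x ∈ O.δ (k+1) c) :
    O.γ k x = O.γ k (O.γ (k+1) c) ∨ ∃ y ∈ O.δ (k+1) c, O.γ k x ∈ O.δ k y := by
  by_cases h : ∃ y ∈ O.δ (k+1) c, O.γ k x ∈ O.δ k y
  · exact Or.inr h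
  · left
    have hmem : O.γ k x ∈
        ({x | ∃ b ∈ O.δ (k+1) c, O.γ k b = x} \ {x | ∃ b ∈ O.δ (k+1) c, x ∈ O.δ k b} :
          Set (O.P k)) :=
      ⟨⟨x, hx, rfl⟩, fun hc => h (by obtain ⟨b, hb, hzb⟩ := hc; exact ⟨b, hb, hzb⟩)⟩
    rw [← hO.glob_γ k c] at hmem
    exact hmem

lemma mem_delta_gamma (hO : O.IsOpetope) {k : ℕ} (c : O.P (k+2)) {z : O.P k}
    (hz : z ∈ O.δ k (O.γ (k+1) c)) : ∃ e ∈ O.δ (k+1) c, z ∈ O.δ k e := by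
  rw [hO.glob_δ k c] at hz; exact hz.1

/-- Descent: if `γ m ∈ δ y` with `y <⁺ q`, there is an *initial* `t` with
`γ m ∈ δ t` and `t <⁺ q`. -/
lemma desc2 (hO : O.IsOpetope) {k : ℕ} (q : O.P (k+1)) :
    ∀ y, O.ltp (k+1) y q → ∀ m : O.P (k+1), O.γ k m ∈ O.δ k y →
      ∃ t, O.Init (k+1) t ∧ O.γ k m ∈ O.δ k t ∧ O.ltp (k+1) t q := by
  intro y
  refine (ltp_wf hO (k+1)).induction
    (C := fun y => O.ltp (k+1) y q → ∀ m : O.P (k+1), O.γ k m ∈ O.δ k y →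
      ∃ t, O.Init (k+1) t ∧ O.γ k m ∈ O.δ k t ∧ O.ltp (k+1) t q) y ?_
  intro y IH hyq m hm
  by_cases hy : O.Init (k+1) y
  · exact ⟨y, hy, hm, hyq⟩
  · obtain ⟨c', hc'⟩ := not_not.mp hy
    subst hc'
    obtain ⟨e, he, hme⟩ := mem_delta_gamma hO c' hm
    have hey : O.ltp (k+1) e (O.γ (k+1) c') := ltp_step c' he rfl
    exact IH e hey (ltp_trans hey hyq) m hme

/-- Any `<⁻`-maximal element of `π(q)` has codomain `γ q`. -/
lemma max_gamma (hO : O.IsOpetope) {k : ℕ} {q m : O.P (k+1)} (_hmI : O.Init (k+1) m)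
    (hmax : ∀ t, O.Init (k+1) t → O.ltp (k+1) t q → ¬ O.ltm k m t)
    (hmq : O.ltp (k+1) m q) : O.γ k m = O.γ k q := by
  suffices H : ∀ x, O.ltp (k+1) x q → O.γ k m = O.γ k x → O.γ k m = O.γ k q from
    H m hmq rfl
  intro x hx
  induction hx using Relation.TransGen.head_induction_on with
  | single h =>
      obtain ⟨c, hxc, hcq⟩ := h
      intro hmx
      rcases step_lemma hO c hxc with hγ | ⟨y, hyc, hxy⟩
      · rw [hmx, hγ, hcq]
      · exfalso
        have hmy : O.γ k m ∈ O.δ k y := by rw [hmx]; exact hxy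
        obtain ⟨t, htI, hmt, htq⟩ := desc2 hO q y (ltp_step c hyc hcq) m hmy
        exact hmax t htI htq (Relation.TransGen.single hmt)
  | head h' hbq IH =>
      obtain ⟨c, hxc, hcb⟩ := h'
      intro hmx
      rcases step_lemma hO c hxc with hγ | ⟨y, hyc, hxy⟩
      · exact IH (by rw [hmx, hγ, hcb])
      · exfalso
        have hmy : O.γ k m ∈ O.δ k y := by rw [hmx]; exact hxy
        have hyq : O.ltp (k+1) y q := Relation.TransGen.head ⟨c, hyc, hcb⟩ hbq
        obtain ⟨t, htI, hmt, htq⟩ := desc2 hO q y hyq m hmy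
        exact hmax t htI htq (Relation.TransGen.single hmt)

/-- Inside `δ c` there is a `<⁻`-path from any element to one with codomain `γ (γ c)`. -/
lemma last_path (hO : O.IsOpetope) {k : ℕ} (c : O.P (k+2)) :
    ∀ e, e ∈ O.δ (k+1) c →
      ∃ f, Relation.ReflTransGen
          (fun a b => O.γ k a ∈ O.δ k b ∧ b ∈ O.δ (k+1) c) e f ∧
        f ∈ O.δ (k+1) c ∧ O.γ k f = O.γ k (O.γ (k+1) c) := by
  intro e
  refine (ltm_flip_wf hO k).induction
    (C := fun e => e ∈ O.δ (k+1) c →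
      ∃ f, Relation.ReflTransGen
          (fun a b => O.γ k a ∈ O.δ k b ∧ b ∈ O.δ (k+1) c) e f ∧
        f ∈ O.δ (k+1) c ∧ O.γ k f = O.γ k (O.γ (k+1) c)) e ?_
  intro e IH he
  rcases step_lemma hO c he with hγ | ⟨y, hyc, hey⟩
  · exact ⟨e, Relation.ReflTransGen.refl, he, hγ⟩
  · obtain ⟨f, hrtg, hf, hγf⟩ := IH y (Relation.TransGen.single hey) hyc
    exact ⟨f, Relation.ReflTransGen.head ⟨hey, hyc⟩ hrtg, hf, hγf⟩

/-- Bridge: a `<⁻`-step into `u` followed by a `<⁻`-step out of `u` can be replaced by a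
path through *initial* faces. -/
lemma bridge (hO : O.IsOpetope) {k : ℕ} :
    ∀ u t u'' : O.P (k+1), O.γ k t ∈ O.δ k u → O.γ k u ∈ O.δ k u'' →
      ∃ g, Relation.ReflTransGen
          (fun a b => O.γ k a ∈ O.δ k b ∧ O.Init (k+1) b) t g ∧
        O.Init (k+1) g ∧ O.γ k g ∈ O.δ k u'' := by
  intro u
  refine (ltp_wf hO (k+1)).induction
    (C := fun u => ∀ t u'' : O.P (k+1), O.γ k t ∈ O.δ k u → O.γ k u ∈ O.δ k u'' →
      ∃ g, Relation.ReflTransGen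
          (fun a b => O.γ k a ∈ O.δ k b ∧ O.Init (k+1) b) t g ∧
        O.Init (k+1) g ∧ O.γ k g ∈ O.δ k u'') u ?_
  intro u IH t u'' htu huu
  by_cases hu : O.Init (k+1) u
  · exact ⟨u, Relation.ReflTransGen.single ⟨htu, hu⟩, hu, huu⟩
  · obtain ⟨c, hc⟩ := not_not.mp hu
    subst hc
    obtain ⟨e, hec, hte⟩ := mem_delta_gamma hO c htu
    obtain ⟨f, hrtg, hfc, hγf⟩ := last_path hO c e hec
    have inner : ∀ e',
        Relation.ReflTransGen (fun a b => O.γ k a ∈ O.δ k b ∧ b ∈ O.δ (k+1) c) e' f →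
        e' ∈ O.δ (k+1) c → ∀ t', O.γ k t' ∈ O.δ k e' →
        ∃ g, Relation.ReflTransGen
            (fun a b => O.γ k a ∈ O.δ k b ∧ O.Init (k+1) b) t' g ∧
          O.Init (k+1) g ∧ O.γ k g ∈ O.δ k u'' := by
      intro e' h
      induction h using Relation.ReflTransGen.head_induction_on with
      | refl =>
          intro hfc' t' ht'
          exact IH f (ltp_step c hfc rfl) t' u'' ht' (by rw [hγf]; exact huu)
      | head step h IH2 =>
          obtain ⟨h1, h2⟩ := step
          intro he' t' ht'
          obtain ⟨g₁, hr1, hg1I, hg1⟩ := IH _ (ltp_step c he' rfl) t' _ ht' h1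
          obtain ⟨g, hr2, hgI, hg⟩ := IH2 h2 g₁ hg1
          exact ⟨g, hr1.trans hr2, hgI, hg⟩
    exact inner e hrtg hec t hte

lemma ic2 (hO : O.IsOpetope) {k : ℕ} :
    ∀ v b : O.P (k+1), Relation.ReflTransGen (fun a b => O.γ k a ∈ O.δ k b) v b →
      O.Init (k+1) b → ∀ a, O.γ k a ∈ O.δ k v →
      Relation.ReflTransGen (fun x y => O.γ k x ∈ O.δ k y ∧ O.Init (k+1) y) a b := by
  intro v b h
  induction h using Relation.ReflTransGen.head_induction_on with
  | refl =>
      intro hbI a ha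
      exact Relation.ReflTransGen.single ⟨ha, hbI⟩
  | head step h IH =>
      intro hbI a ha
      obtain ⟨g, hr, hgI, hg⟩ := bridge hO _ a _ ha step
      exact hr.trans (IH hbI g hg)

/-- A `<⁻`-chain between initial faces can be replaced by a chain through initial faces. -/
lemma ic (hO : O.IsOpetope) {k : ℕ} {a b : O.P (k+1)} (h : O.ltm k a b)
    (hbI : O.Init (k+1) b) :
    Relation.ReflTransGen (fun x y => O.γ k x ∈ O.δ k y ∧ O.Init (k+1) y) a b := by
  obtain ⟨v, hav, hvb⟩ := Relation.TransGen.head'_iff.mp h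
  exact ic2 hO v b hvb hbI a hav

/-- One step of transport: if `x <⁺ q` and `γ x ∈ δ y` with `y` initial, then
`y <⁺ q` or `q <⁻ y`. -/
lemma b1 (hO : O.IsOpetope) {k : ℕ} (q : O.P (k+1)) :
    ∀ x, O.ltp (k+1) x q → ∀ y, O.γ k x ∈ O.δ k y → O.Init (k+1) y →
      O.ltp (k+1) y q ∨ O.ltm k q y := by
  intro x hx
  induction hx using Relation.TransGen.head_induction_on with
  | single h =>
      obtain ⟨c, hxc, hcq⟩ := h
      intro y hxy hyI
      rcases step_lemma hO c hxc with hγ | ⟨y', hy'c, hxy'⟩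
      · right
        refine Relation.TransGen.single ?_
        show O.γ k q ∈ O.δ k y
        rw [← hcq, ← hγ]; exact hxy
      · rcases hO.pencil_δ k _ y y' hxy hxy' with rfl | hyy' | hy'y
        · exact Or.inl (ltp_step c hy'c hcq)
        · exact Or.inl (Relation.TransGen.tail hyy' ⟨c, hy'c, hcq⟩)
        · exact absurd hy'y (not_ltp_init hyI)
  | head h' hbq IH =>
      obtain ⟨c, hxc, hcb⟩ := h'
      intro y hxy hyI
      rcases step_lemma hO c hxc with hγ | ⟨y', hy'c, hxy'⟩
      · exact IH y (by rw [← hcb, ← hγ]; exact hxy) hyI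
      · rcases hO.pencil_δ k _ y y' hxy hxy' with rfl | hyy' | hy'y
        · exact Or.inl (Relation.TransGen.head ⟨c, hy'c, hcb⟩ hbq)
        · exact Or.inl (ltp_trans hyy' (Relation.TransGen.head ⟨c, hy'c, hcb⟩ hbq))
        · exact absurd hy'y (not_ltp_init hyI)

/-- Iterated transport along a chain of initial faces. -/
lemma itb1 (hO : O.IsOpetope) {k : ℕ} (q : O.P (k+1)) {p₂ : O.P (k+1)} :
    ∀ x, Relation.ReflTransGen
        (fun a b => O.γ k a ∈ O.δ k b ∧ O.Init (k+1) b) x p₂ →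
      O.ltp (k+1) x q → O.ltp (k+1) p₂ q ∨ O.ltm k q p₂ := by
  intro x h
  induction h using Relation.ReflTransGen.head_induction_on with
  | refl => exact fun hx => Or.inl hx
  | head step h IH =>
      intro hx
      obtain ⟨hxy, hyI⟩ := step
      rcases b1 hO q _ hx _ hxy hyI with hyq | hqy
      · exact IH hyq
      · right
        exact Relation.TransGen.trans_left hqy (Relation.ReflTransGen.mono (fun _ _ hh => hh.1) _ _ h)

end PreOpetope

open PreOpetope in
/-- Let `P` be a positive opetope and `p ∈ P*_{i+1} = P_{i+1} − γ(P_{i+2})`.  Then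
`π_i(p)` is a convex subtree of `(P*_i, ≤⁻)`: it has a largest element (w.r.t. `≤⁻`),
and it is order-convex in `P*_i` for the lower order. -/
theorem stmt_12 (O : PreOpetope) (hO : O.IsOpetope) (i : ℕ)
    (p : O.P (i+1))
    (hp : ¬ ∃ c : O.P (i+2), O.γ (i+1) c = p) :
    (∃ m ∈ O.piFace i p, ∀ x ∈ O.piFace i p, x = m ∨ O.ltmAll i x m) ∧
    (∀ p₁ ∈ O.piFace i p, ∀ p₃ ∈ O.piFace i p, ∀ p₂ : O.P i,
      (¬ ∃ c : O.P (i+1), O.γ i c = p₂) →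
      O.ltmAll i p₁ p₂ → O.ltmAll i p₂ p₃ → p₂ ∈ O.piFace i p) := by
  cases i with
  | zero =>
    constructor
    · obtain ⟨x₀, hx₀⟩ := hO.pos 0 p
      obtain ⟨s₀, hs₀I, hs₀⟩ := exists_init_le hO (O.γ 0 p) x₀ (ltp_step p hx₀ rfl)
      refine ⟨s₀, ⟨hs₀I, hs₀⟩, ?_⟩
      rintro x ⟨hxI, hxq⟩
      rcases hO.strict0 x s₀ with h | h | h
      · exact Or.inl h
      · exact absurd h (not_ltp_init hs₀I)
      · exact absurd h (not_ltp_init hxI)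
    · rintro p₁ - p₃ - p₂ - h12 -
      exact (h12 : False).elim
  | succ k =>
    constructor
    · obtain ⟨x₀, hx₀⟩ := hO.pos (k+1) p
      obtain ⟨s₀, hs₀I, hs₀⟩ :=
        exists_init_le hO (O.γ (k+1) p) x₀ (ltp_step p hx₀ rfl)
      have hwf := ltm_flip_wf hO k
      obtain ⟨m, hmS, hmax⟩ := hwf.has_min
        {s | O.Init (k+1) s ∧ O.ltp (k+1) s (O.γ (k+1) p)} ⟨s₀, hs₀I, hs₀⟩
      have hmγ : O.γ k m = O.γ k (O.γ (k+1) p) :=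
        max_gamma hO hmS.1 (fun t htI htq hmt => hmax t ⟨htI, htq⟩ hmt) hmS.2
      refine ⟨m, hmS, ?_⟩
      have below : ∀ x, (O.Init (k+1) x ∧ O.ltp (k+1) x (O.γ (k+1) p)) →
          x = m ∨ O.ltm k x m := by
        intro x
        refine hwf.induction
          (C := fun x => (O.Init (k+1) x ∧ O.ltp (k+1) x (O.γ (k+1) p)) →
            x = m ∨ O.ltm k x m) x ?_
        intro x IH hx
        by_cases hex : ∃ y, (O.Init (k+1) y ∧ O.ltp (k+1) y (O.γ (k+1) p)) ∧ O.ltm k x y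
        · obtain ⟨y, hy, hxy⟩ := hex
          rcases IH y hxy hy with rfl | hym
          · exact Or.inr hxy
          · exact Or.inr (Relation.TransGen.trans hxy hym)
        · have hxγ : O.γ k x = O.γ k (O.γ (k+1) p) :=
            max_gamma hO hx.1 (fun t htI htq hxt => hex ⟨t, ⟨htI, htq⟩, hxt⟩) hx.2
          rcases hO.pencil_γ k x m (hxγ.trans hmγ.symm) with h | h | h
          · exact Or.inl h
          · exact absurd h (not_ltp_init hmS.1)
          · exact absurd h (not_ltp_init hx.1)
      exact fun x hx => below x hx
    · rintro p₁ ⟨hp₁I, hp₁q⟩ p₃ ⟨hp₃I, hp₃q⟩ p₂ hp₂I h12 h23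
      refine ⟨hp₂I, ?_⟩
      have hrtg := ic hO (show O.ltm k p₁ p₂ from h12) hp₂I
      rcases itb1 hO (O.γ (k+1) p) p₁ hrtg hp₁q with h | h
      · exact h
      · exact absurd (And.intro (Or.inr (Relation.TransGen.trans h h23)) (Or.inl hp₃q))
          (hO.disj k p₃ (O.γ (k+1) p))
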